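/- Let T > 0, let f : [0,T] → ℝ be continuous, let r ≥ 1 and α > 0 be real numbers, and suppose B ∈ [0,∞) satisfies ∫₀^T ∫₀^T |f(t) − f(s)|^r / |t − s|^{αr + 2} dt ds ≤ B. Then for all s, t ∈ [0,T]: |f(t) − f(s)| ≤ 8·(4B)^{1/r}·((α + 2/r)/α)·|t − s|^α. In particular f is α-Hölder continuous with constant 8·(4B)^{1/r}·(α + 2/r)/α. -/

import Mathlib

open MeasureTheory Set

lemma holder1d {c d r : ℝ} (hcd : c < d) (hr : 1 ≤ r) (ψ : ℝ → ℝ)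
    (hψc : Continuous ψ) (hψ0 : ∀ x, 0 ≤ ψ x) :
    ∫ x in Icc c d, ψ x ≤ (∫ x in Icc c d, ψ x ^ r) ^ (1/r) * (d - c) ^ (1 - 1/r) := by
  rcases eq_or_lt_of_le hr with h1 | h1
  · simp only [← h1]
    simp [Real.rpow_one]
  · have hμ : IsFiniteMeasure (volume.restrict (Icc c d)) :=
      ⟨by simp [Real.volume_Icc]⟩
    have hpq : r.HolderConjugate (r/(r-1)) := Real.HolderConjugate.conjExponent h1
    obtain ⟨C, hC⟩ := (isCompact_Icc (a := c) (b := d)).exists_bound_of_continuousOn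
      hψc.continuousOn
    have hmem : ∀ p : ENNReal, MemLp ψ p (volume.restrict (Icc c d)) := fun p =>
      MemLp.of_bound hψc.aestronglyMeasurable C
        (ae_restrict_of_forall_mem measurableSet_Icc hC)
    have := integral_mul_le_Lp_mul_Lq_of_nonneg (μ := volume.restrict (Icc c d)) hpq
      (f := ψ) (g := fun _ => (1:ℝ)) (Filter.Eventually.of_forall hψ0)
      (Filter.Eventually.of_forall (fun _ => zero_le_one)) (hmem _) (memLp_const 1)
    simp only [mul_one] at this
    refine this.trans_eq ?_
    congr 1
    rw [integral_congr_ae (Filter.Eventually.of_forall (fun x => Real.one_rpow _))]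
    rw [setIntegral_const, smul_eq_mul, mul_one, Real.volume_real_Icc_of_le (by linarith)]
    congr 1
    have hr0 : r ≠ 0 := by positivity
    have hr1 : r - 1 ≠ 0 := sub_ne_zero.2 (ne_of_gt h1)
    field_simp

lemma avg_holder {c d r : ℝ} (hcd : c < d) (hr : 1 ≤ r) (ψ : ℝ → ℝ)
    (hψc : Continuous ψ) (hψ0 : ∀ x, 0 ≤ ψ x) :
    (d - c)⁻¹ * ∫ x in Icc c d, ψ x ≤ ((d - c)⁻¹ * ∫ x in Icc c d, ψ x ^ r) ^ (1/r) := by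
  have hl : (0:ℝ) < d - c := by linarith
  have h0 : (0:ℝ) ≤ ∫ x in Icc c d, ψ x ^ r :=
    integral_nonneg (fun x => Real.rpow_nonneg (hψ0 x) r)
  have h2 : (d-c)^(1-1/r) * (d-c)^(1/r) = d - c := by
    rw [← Real.rpow_add hl]
    ring_nf
    exact Real.rpow_one _
  have key : (d - c)⁻¹ * (d-c)^(1-1/r) = ((d-c)^(1/r))⁻¹ := by
    have hp : (0:ℝ) < (d-c)^(1/r) := Real.rpow_pos_of_pos hl _
    have hr0 : r ≠ 0 := by positivity
    have he : (1:ℝ) - 1/r = (r-1)/r := by field_simp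
    rw [he] at h2 ⊢
    field_simp
    linarith [h2]
  rw [Real.mul_rpow (by positivity) h0, Real.inv_rpow hl.le]
  calc (d - c)⁻¹ * ∫ x in Icc c d, ψ x
      ≤ (d - c)⁻¹ * ((∫ x in Icc c d, ψ x ^ r) ^ (1/r) * (d - c) ^ (1 - 1/r)) := by
        have := holder1d hcd hr ψ hψc hψ0
        have hinv : (0:ℝ) ≤ (d - c)⁻¹ := by positivity
        exact mul_le_mul_of_nonneg_left this hinv
    _ = ((d-c)^(1/r))⁻¹ * (∫ x in Icc c d, ψ x ^ r) ^ (1/r) := by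
        rw [← key]; ring

lemma phi_cont (g : ℝ → ℝ) (hg : Continuous g) {r : ℝ} (hr : 0 ≤ r) {a b : ℝ} (hab : a ≤ b) :
    Continuous (fun x => ∫ y in Icc a b, |g x - g y| ^ r) := by
  have huc : Continuous (Function.uncurry (fun x y => |g x - g y| ^ r)) := by
    apply Continuous.rpow_const
    · exact ((hg.comp continuous_fst).sub (hg.comp continuous_snd)).abs
    · exact fun _ => Or.inr hr
  have h := intervalIntegral.continuous_parametric_intervalIntegral_of_continuous'
    (μ := volume) (f := fun x y => |g x - g y| ^ r) huc a b
  convert h using 2 with x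
  rw [intervalIntegral.integral_of_le hab, integral_Icc_eq_integral_Ioc]

lemma inv_mul_rpow_aux {l r : ℝ} (hl : 0 < l) (hr : 1 ≤ r) :
    l⁻¹ * l^(1-1/r) = (l^(1/r))⁻¹ := by
  have hp : (0:ℝ) < l^(1/r) := Real.rpow_pos_of_pos hl _
  have hr0 : r ≠ 0 := by positivity
  have h2 : l^(1-1/r) * l^(1/r) = l := by
    rw [← Real.rpow_add hl]
    ring_nf
    exact Real.rpow_one _
  have he : (1:ℝ) - 1/r = (r-1)/r := by field_simp
  rw [he] at h2 ⊢
  field_simp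
  linarith [h2]

lemma step_lemma (g : ℝ → ℝ) (hg : Continuous g) {r α B T : ℝ} (hr : 1 ≤ r) (hB : 0 ≤ B)
    (key : ∀ a b : ℝ, 0 ≤ a → a < b → b ≤ T →
      ∫ x in Icc a b, (∫ y in Icc a b, |g x - g y| ^ r) ≤ (b-a)^(α*r+2) * B)
    {a b a' b' : ℝ} (ha : 0 ≤ a) (haa' : a ≤ a') (hab' : a' < b') (hb'b : b' ≤ b) (hbT : b ≤ T) :
    |((b'-a')⁻¹ * ∫ x in Icc a' b', g x) - (b-a)⁻¹ * ∫ x in Icc a b, g x|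
      ≤ ((b-a)^(α*r+1) * B / (b'-a'))^(1/r) := by
  have hab : a < b := lt_of_le_of_lt haa' (lt_of_lt_of_le hab' hb'b)
  have hl : (0:ℝ) < b - a := by linarith
  have hl' : (0:ℝ) < b' - a' := by linarith
  have hr0 : (0:ℝ) < r := lt_of_lt_of_le one_pos hr
  set A : ℝ := (b-a)⁻¹ * ∫ x in Icc a b, g x with hA
  set φ : ℝ → ℝ := fun x => ∫ y in Icc a b, |g x - g y| ^ r with hφ
  have hφc : Continuous φ := phi_cont g hg hr0.le hab.le
  have hφ0 : ∀ x, 0 ≤ φ x := fun x =>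
    integral_nonneg (fun y => Real.rpow_nonneg (abs_nonneg _) r)
  -- pointwise bound |g x - A| ≤ ((b-a)⁻¹ φ x)^(1/r)
  have h3 : ∀ x, |g x - A| ≤ ((b-a)⁻¹ * φ x) ^ (1/r) := by
    intro x
    have e1 : g x - A = (b-a)⁻¹ * ∫ y in Icc a b, (g x - g y) := by
      rw [integral_sub (integrable_const _) (hg.integrableOn_Icc), setIntegral_const]
      simp only [smul_eq_mul, Real.volume_real_Icc_of_le hab.le, Real.volume_Icc, ENNReal.toReal_ofReal hl.le]
      rw [hA]
      field_simp
    rw [e1, abs_mul, abs_inv, abs_of_pos hl]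
    calc (b-a)⁻¹ * |∫ y in Icc a b, (g x - g y)|
        ≤ (b-a)⁻¹ * ∫ y in Icc a b, |g x - g y| := by
          apply mul_le_mul_of_nonneg_left _ (by positivity)
          simpa [Real.norm_eq_abs] using
            norm_integral_le_integral_norm (μ := volume.restrict (Icc a b))
              (f := fun y => g x - g y)
      _ ≤ ((b-a)⁻¹ * φ x) ^ (1/r) :=
          avg_holder hab hr _ ((continuous_const.sub hg).abs) (fun _ => abs_nonneg _)
  -- integral bound
  have h5 : ∫ x in Icc a' b', |g x - A| ^ r ≤ (b-a)⁻¹ * ((b-a)^(α*r+1+1) * B) := by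
    calc ∫ x in Icc a' b', |g x - A| ^ r
        ≤ ∫ x in Icc a' b', (b-a)⁻¹ * φ x := by
          apply setIntegral_mono_on
          · exact ((hg.sub continuous_const).abs.rpow_const
              (fun _ => Or.inr hr0.le)).integrableOn_Icc
          · exact (continuous_const.mul hφc).integrableOn_Icc
          · exact measurableSet_Icc
          · intro x _
            have h := Real.rpow_le_rpow (abs_nonneg _) (h3 x) hr0.le
            rwa [← Real.rpow_mul (by positivity), one_div, inv_mul_cancel₀ hr0.ne',
              Real.rpow_one] at h
      _ ≤ (b-a)⁻¹ * ((b-a)^(α*r+1+1) * B) := by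
          rw [integral_const_mul]
          apply mul_le_mul_of_nonneg_left _ (by positivity)
          calc ∫ x in Icc a' b', φ x
              ≤ ∫ x in Icc a b, φ x := by
                apply setIntegral_mono_set hφc.integrableOn_Icc
                  (Filter.Eventually.of_forall hφ0)
                exact (Icc_subset_Icc haa' (le_trans hb'b le_rfl)).eventuallyLE
            _ ≤ (b-a)^(α*r+2) * B := key a b ha hab hbT
            _ = (b-a)^(α*r+1+1) * B := by rw [show (α*r+2:ℝ) = α*r+1+1 by ring]
  -- average difference
  have e2 : ((b'-a')⁻¹ * ∫ x in Icc a' b', g x) - A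
      = (b'-a')⁻¹ * ∫ x in Icc a' b', (g x - A) := by
    rw [integral_sub hg.integrableOn_Icc (integrable_const _), setIntegral_const]
    simp only [smul_eq_mul, Real.volume_real_Icc_of_le hab'.le, Real.volume_Icc, ENNReal.toReal_ofReal hl'.le]
    field_simp
  rw [e2]
  calc |(b'-a')⁻¹ * ∫ x in Icc a' b', (g x - A)|
      ≤ (b'-a')⁻¹ * ∫ x in Icc a' b', |g x - A| := by
        rw [abs_mul, abs_inv, abs_of_pos hl']
        apply mul_le_mul_of_nonneg_left _ (by positivity)
        simpa [Real.norm_eq_abs] using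
          norm_integral_le_integral_norm (μ := volume.restrict (Icc a' b'))
            (f := fun x => g x - A)
    _ ≤ (b'-a')⁻¹ * ((∫ x in Icc a' b', |g x - A| ^ r) ^ (1/r) * (b'-a') ^ (1-1/r)) := by
        apply mul_le_mul_of_nonneg_left _ (by positivity)
        exact holder1d hab' hr _ (hg.sub continuous_const).abs (fun _ => abs_nonneg _)
    _ ≤ (b'-a')⁻¹ * ((((b-a)^(α*r+1) * B)) ^ (1/r) * (b'-a') ^ (1-1/r)) := by
        have hY : ∫ x in Icc a' b', |g x - A| ^ r ≤ (b-a)^(α*r+1) * B := by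
          have e3 : (b-a)⁻¹ * ((b-a)^(α*r+1+1) * B) = (b-a)^(α*r+1) * B := by
            rw [Real.rpow_add hl (α*r+1) 1, Real.rpow_one]
            field_simp
          linarith [h5]
        have h0 : (0:ℝ) ≤ ∫ x in Icc a' b', |g x - A| ^ r :=
          integral_nonneg (fun x => Real.rpow_nonneg (abs_nonneg _) r)
        have := Real.rpow_le_rpow h0 hY (by positivity : (0:ℝ) ≤ 1/r)
        apply mul_le_mul_of_nonneg_left _ (by positivity)
        exact mul_le_mul_of_nonneg_right this (Real.rpow_nonneg hl'.le _)
    _ = ((b-a)^(α*r+1) * B / (b'-a'))^(1/r) := by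
        rw [Real.div_rpow (by positivity) hl'.le]
        rw [show (b'-a')⁻¹ * ((((b-a)^(α*r+1) * B)) ^ (1/r) * (b'-a') ^ (1-1/r))
            = ((b-a)^(α*r+1) * B) ^ (1/r) * ((b'-a')⁻¹ * (b'-a') ^ (1-1/r)) by ring]
        rw [inv_mul_rpow_aux hl' hr]
        ring

lemma key_lemma (f g : ℝ → ℝ) (hg : Continuous g) {T r α B : ℝ} (hT : 0 < T)
    (hr : 1 ≤ r) (hα : 0 < α) (hB : 0 ≤ B)
    (hgf : ∀ x ∈ Icc (0:ℝ) T, g x = f x)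
    (hint : (∫⁻ t in Icc (0:ℝ) T, ∫⁻ s in Icc (0:ℝ) T,
        ENNReal.ofReal (|f t - f s| ^ r / |t - s| ^ (α * r + 2)))
      ≤ ENNReal.ofReal B) :
    ∀ a b : ℝ, 0 ≤ a → a < b → b ≤ T →
      ∫ x in Icc a b, (∫ y in Icc a b, |g x - g y| ^ r) ≤ (b-a)^(α*r+2) * B := by
  intro a b ha hab hbT
  have hr0 : (0:ℝ) < r := lt_of_lt_of_le one_pos hr
  have hsub : Icc a b ⊆ Icc (0:ℝ) T := Icc_subset_Icc ha hbT
  set E : ℝ := α * r + 2 with hE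
  have hE0 : (0:ℝ) ≤ E := by positivity
  set c : ℝ := (b-a)^E with hc
  have hc0 : (0:ℝ) ≤ c := Real.rpow_nonneg (by linarith) _
  set q : ℝ → ℝ → ℝ := fun x y => |f x - f y| ^ r / |x - y| ^ E with hq
  have hq0 : ∀ x y, 0 ≤ q x y := fun x y =>
    div_nonneg (Real.rpow_nonneg (abs_nonneg _) _) (Real.rpow_nonneg (abs_nonneg _) _)
  -- pointwise bound
  have hpt : ∀ x ∈ Icc a b, ∀ y ∈ Icc a b, |g x - g y| ^ r ≤ c * q x y := by
    intro x hx y hy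
    rw [hgf x (hsub hx), hgf y (hsub hy)]
    rcases eq_or_ne x y with rfl | hxy
    · simp only [sub_self, abs_zero]
      rw [Real.zero_rpow hr0.ne']
      exact mul_nonneg hc0 (hq0 _ _)
    · have hw0 : (0:ℝ) < |x - y| ^ E :=
        Real.rpow_pos_of_pos (abs_pos.2 (sub_ne_zero.2 hxy)) _
      have hwc : |x - y| ^ E ≤ c := by
        apply Real.rpow_le_rpow (abs_nonneg _) _ hE0
        rw [abs_le]
        constructor
        · have := hx.1; have := hy.2; linarith
        · have := hx.2; have := hy.1; linarith
      calc |f x - f y| ^ r = |x - y| ^ E * q x y := by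
            rw [hq]
            field_simp
        _ ≤ c * q x y := mul_le_mul_of_nonneg_right hwc (hq0 _ _)
  -- boundedness of the inner lintegral
  obtain ⟨M0, hM0⟩ := (isCompact_Icc (a := a) (b := b)).exists_bound_of_continuousOn
    hg.continuousOn
  have habs : ∀ x ∈ Icc a b, ∀ y ∈ Icc a b, |g x - g y| ^ r ≤ (2*|M0|+1) ^ r := by
    intro x hx y hy
    apply Real.rpow_le_rpow (abs_nonneg _) _ hr0.le
    have h1 := hM0 x hx
    have h2 := hM0 y hy
    rw [Real.norm_eq_abs] at h1 h2
    have := abs_sub (g x) (g y)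
    have : |g x - g y| ≤ |g x| + |g y| := abs_sub _ _
    have hM : M0 ≤ |M0| := le_abs_self _
    linarith
  set L : ℝ → ENNReal := fun x => ∫⁻ y in Icc a b, ENNReal.ofReal (|g x - g y| ^ r) with hL
  have hLfin : ∀ x ∈ Icc a b, L x ≠ ⊤ := by
    intro x hx
    have : L x ≤ ∫⁻ _ in Icc a b, ENNReal.ofReal ((2*|M0|+1) ^ r) := by
      apply setLIntegral_mono' measurableSet_Icc
      intro y hy
      exact ENNReal.ofReal_le_ofReal (habs x hx y hy)
    refine ne_top_of_le_ne_top ?_ this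
    rw [setLIntegral_const]
    exact ENNReal.mul_ne_top ENNReal.ofReal_ne_top (by simp [Real.volume_Icc])
  have hφeq : ∀ x, (∫ y in Icc a b, |g x - g y| ^ r) = (L x).toReal := by
    intro x
    exact integral_eq_lintegral_of_nonneg_ae
      (Filter.Eventually.of_forall (fun y => Real.rpow_nonneg (abs_nonneg _) r))
      ((continuous_const.sub hg).abs.rpow_const
        (fun _ => Or.inr hr0.le)).aestronglyMeasurable
  have houter : ∫ x in Icc a b, (∫ y in Icc a b, |g x - g y| ^ r)
      = (∫⁻ x in Icc a b, ENNReal.ofReal (∫ y in Icc a b, |g x - g y| ^ r)).toReal :=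
    integral_eq_lintegral_of_nonneg_ae
      (Filter.Eventually.of_forall (fun x =>
        integral_nonneg (fun y => Real.rpow_nonneg (abs_nonneg _) r)))
      (phi_cont g hg hr0.le hab.le).aestronglyMeasurable
  have hLcongr : ∫⁻ x in Icc a b, ENNReal.ofReal (∫ y in Icc a b, |g x - g y| ^ r)
      = ∫⁻ x in Icc a b, L x := by
    apply setLIntegral_congr_fun measurableSet_Icc
    intro x hx
    beta_reduce
    rw [hφeq x, ENNReal.ofReal_toReal (hLfin x hx)]
  have hmain : ∫⁻ x in Icc a b, L x ≤ ENNReal.ofReal c * ENNReal.ofReal B := by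
    calc ∫⁻ x in Icc a b, L x
        ≤ ∫⁻ x in Icc a b, ENNReal.ofReal c * ∫⁻ y in Icc 0 T, ENNReal.ofReal (q x y) := by
          apply setLIntegral_mono' measurableSet_Icc
          intro x hx
          calc L x ≤ ∫⁻ y in Icc a b, ENNReal.ofReal (c * q x y) := by
                apply setLIntegral_mono' measurableSet_Icc
                intro y hy
                exact ENNReal.ofReal_le_ofReal (hpt x hx y hy)
            _ = ENNReal.ofReal c * ∫⁻ y in Icc a b, ENNReal.ofReal (q x y) := by
                rw [← lintegral_const_mul' _ _ ENNReal.ofReal_ne_top]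
                apply lintegral_congr
                intro y
                rw [ENNReal.ofReal_mul hc0]
            _ ≤ ENNReal.ofReal c * ∫⁻ y in Icc 0 T, ENNReal.ofReal (q x y) :=
                mul_le_mul_right (lintegral_mono_set hsub) _
      _ = ENNReal.ofReal c * ∫⁻ x in Icc a b, ∫⁻ y in Icc 0 T, ENNReal.ofReal (q x y) :=
          lintegral_const_mul' _ _ ENNReal.ofReal_ne_top
      _ ≤ ENNReal.ofReal c * ∫⁻ x in Icc 0 T, ∫⁻ y in Icc 0 T, ENNReal.ofReal (q x y) :=
          mul_le_mul_right (lintegral_mono_set hsub) _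
      _ ≤ ENNReal.ofReal c * ENNReal.ofReal B := mul_le_mul_right hint _
  rw [houter, hLcongr]
  calc (∫⁻ x in Icc a b, L x).toReal
      ≤ (ENNReal.ofReal c * ENNReal.ofReal B).toReal :=
        ENNReal.toReal_mono (ENNReal.mul_ne_top ENNReal.ofReal_ne_top ENNReal.ofReal_ne_top) hmain
    _ = c * B := by
        rw [← ENNReal.ofReal_mul hc0, ENNReal.toReal_ofReal (mul_nonneg hc0 hB)]

lemma tele_seq {A : ℕ → ℝ} {L c q : ℝ} (hc : 0 ≤ c) (hq0 : 0 ≤ q) (hq1 : q < 1)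
    (hstep : ∀ n, |A (n+1) - A n| ≤ c * q ^ n)
    (hlim : Filter.Tendsto A Filter.atTop (nhds L)) :
    |L - A 0| ≤ c / (1 - q) := by
  have h1q : (0:ℝ) < 1 - q := by linarith
  have hbound : ∀ n, |A n - A 0| ≤ c / (1 - q) := by
    intro n
    have h1 : dist (A 0) (A n) ≤ ∑ i ∈ Finset.range n, dist (A i) (A (i+1)) :=
      dist_le_range_sum_dist A n
    have h2 : ∑ i ∈ Finset.range n, dist (A i) (A (i+1))
        ≤ ∑ i ∈ Finset.range n, c * q ^ i := by
      apply Finset.sum_le_sum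
      intro i _
      rw [Real.dist_eq, abs_sub_comm]
      exact hstep i
    have h3 : ∑ i ∈ Finset.range n, c * q ^ i ≤ c / (1 - q) := by
      rw [← Finset.mul_sum]
      have hgeom : ∑ i ∈ Finset.range n, q ^ i = (1 - q ^ n) / (1 - q) := by
        rw [geom_sum_eq (by linarith : q ≠ 1)]
        rw [div_eq_div_iff (by linarith) (by linarith)]
        ring
      rw [hgeom, div_eq_mul_inv, div_eq_mul_inv, ← mul_assoc]
      apply mul_le_mul_of_nonneg_right _ (by positivity)
      have : q ^ n ≥ 0 := by positivity
      nlinarith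
    calc |A n - A 0| = dist (A 0) (A n) := by rw [dist_comm, Real.dist_eq]
      _ ≤ _ := le_trans h1 (le_trans h2 h3)
  have htend : Filter.Tendsto (fun n => |A n - A 0|) Filter.atTop (nhds |L - A 0|) :=
    ((hlim.sub tendsto_const_nhds).abs)
  exact le_of_tendsto htend (Filter.Eventually.of_forall hbound)

lemma avg_tendsto (g : ℝ → ℝ) (hg : Continuous g) {x₀ : ℝ} (p q : ℕ → ℝ)
    (hlt : ∀ n, p n < q n) (hmem : ∀ n, x₀ ∈ Icc (p n) (q n))
    (hp : Filter.Tendsto p Filter.atTop (nhds x₀))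
    (hq : Filter.Tendsto q Filter.atTop (nhds x₀)) :
    Filter.Tendsto (fun n => (q n - p n)⁻¹ * ∫ x in Icc (p n) (q n), g x)
      Filter.atTop (nhds (g x₀)) := by
  rw [Metric.tendsto_atTop]
  intro ε hε
  obtain ⟨δ, hδ0, hδ⟩ := Metric.continuousAt_iff.1 (hg.continuousAt (x := x₀))
    (ε/2) (by linarith)
  obtain ⟨N1, hN1⟩ := Metric.tendsto_atTop.1 hp δ hδ0
  obtain ⟨N2, hN2⟩ := Metric.tendsto_atTop.1 hq δ hδ0
  refine ⟨max N1 N2, fun n hn => ?_⟩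
  have hpn := hN1 n (le_trans (le_max_left _ _) hn)
  have hqn := hN2 n (le_trans (le_max_right _ _) hn)
  have hl : (0:ℝ) < q n - p n := by linarith [hlt n]
  have hbd : ∀ x ∈ Icc (p n) (q n), ‖g x - g x₀‖ ≤ ε/2 := by
    intro x hx
    have hx0 : dist x x₀ < δ := by
      rw [Real.dist_eq, abs_lt]
      rw [Real.dist_eq, abs_lt] at hpn hqn
      have h1 := (hmem n).1; have h2 := (hmem n).2
      constructor <;> [nlinarith [hx.1]; nlinarith [hx.2]]
    exact le_of_lt (by simpa [Real.dist_eq, Real.norm_eq_abs] using hδ hx0)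
  have e : ((q n - p n)⁻¹ * ∫ x in Icc (p n) (q n), g x) - g x₀
      = (q n - p n)⁻¹ * ∫ x in Icc (p n) (q n), (g x - g x₀) := by
    rw [integral_sub hg.integrableOn_Icc (integrable_const _), setIntegral_const]
    simp only [smul_eq_mul, Real.volume_real_Icc_of_le (hlt n).le, Real.volume_Icc, ENNReal.toReal_ofReal hl.le]
    field_simp
  rw [Real.dist_eq, e, abs_mul, abs_inv, abs_of_pos hl]
  have hnorm : ‖∫ x in Icc (p n) (q n), (g x - g x₀)‖ ≤ ε/2 * (q n - p n) := by
    have := norm_setIntegral_le_of_norm_le_const (μ := volume)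
      (s := Icc (p n) (q n)) (f := fun x => g x - g x₀) (C := ε/2)
      (by simp [Real.volume_Icc]) hbd
    rwa [Real.volume_real_Icc_of_le (hlt n).le] at this
  rw [Real.norm_eq_abs] at hnorm
  calc (q n - p n)⁻¹ * |∫ x in Icc (p n) (q n), (g x - g x₀)|
      ≤ (q n - p n)⁻¹ * (ε/2 * (q n - p n)) := by
        exact mul_le_mul_of_nonneg_left hnorm (by positivity)
    _ = ε/2 := by field_simp
    _ < ε := by linarith

theorem main_aux (T : ℝ) (hT : 0 < T) (f : ℝ → ℝ) (hf : ContinuousOn f (Set.Icc 0 T))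
    (r α B : ℝ) (hr : 1 ≤ r) (hα : 0 < α) (hB : 0 ≤ B)
    (hint : (∫⁻ t in Set.Icc (0:ℝ) T, ∫⁻ s in Set.Icc (0:ℝ) T,
        ENNReal.ofReal (|f t - f s| ^ r / |t - s| ^ (α * r + 2)))
      ≤ ENNReal.ofReal B)
    {s t : ℝ} (hs : s ∈ Set.Icc (0:ℝ) T) (ht : t ∈ Set.Icc (0:ℝ) T) (hst : s < t) :
    |f t - f s| ≤ 8 * (4 * B) ^ (1 / r) * ((α + 2 / r) / α) * (t - s) ^ α := by
  have hr0 : (0:ℝ) < r := lt_of_lt_of_le one_pos hr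
  -- continuous extension of f
  set g : ℝ → ℝ := fun x => f (max 0 (min x T)) with hgdef
  have hgc : Continuous g := by
    apply hf.comp_continuous (continuous_const.max (continuous_id.min continuous_const))
    intro x
    exact ⟨le_max_left _ _, max_le hT.le (min_le_right _ _)⟩
  have hgf : ∀ x ∈ Icc (0:ℝ) T, g x = f x := by
    intro x hx
    simp only [hgdef]
    rw [min_eq_left hx.2, max_eq_right hx.1]
  have key := key_lemma f g hgc hT hr hα hB hgf hint
  set u : ℝ := t - s with hu_def
  have hu : (0:ℝ) < u := by simp [hu_def]; linarith
  set d : ℕ → ℝ := fun n => u * Real.exp (-(n * r)) with hd_def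
  have hd0 : ∀ n, (0:ℝ) < d n := fun n => mul_pos hu (Real.exp_pos _)
  have hdu : ∀ n, d n ≤ u := by
    intro n
    have : Real.exp (-(n * r)) ≤ 1 := Real.exp_le_one_iff.2 (neg_nonpos.2 (by positivity))
    calc d n = u * Real.exp (-(n*r)) := rfl
      _ ≤ u * 1 := mul_le_mul_of_nonneg_left this hu.le
      _ = u := mul_one u
  have hdrel : ∀ n, d (n+1) = Real.exp (-r) * d n := by
    intro n
    show u * Real.exp (-((n+1 : ℕ) * r)) = Real.exp (-r) * (u * Real.exp (-(n * r)))
    rw [show Real.exp (-r) * (u * Real.exp (-(n * r))) = u * (Real.exp (-(n*r)) * Real.exp (-r))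
      by ring, ← Real.exp_add]
    push_cast
    ring_nf
  have hdmono : ∀ n, d (n+1) ≤ d n := by
    intro n
    rw [hdrel n]
    have h1 : Real.exp (-r) ≤ 1 := Real.exp_le_one_iff.2 (by linarith)
    nlinarith [hd0 n]
  set Q : ℝ := Real.exp (-(r*α)) with hQ_def
  have hQ0 : (0:ℝ) ≤ Q := Real.exp_nonneg _
  have hQ1 : Q < 1 := Real.exp_lt_one_iff.2 (by nlinarith)
  set c0 : ℝ := Real.exp 1 * B ^ (1/r) * u ^ α with hc0_def
  have hc0 : (0:ℝ) ≤ c0 := by positivity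
  have hdn : ∀ n : ℕ, (d n) ^ α = u ^ α * Q ^ n := by
    intro n
    show (u * Real.exp (-(n * r))) ^ α = _
    rw [Real.mul_rpow hu.le (Real.exp_nonneg _), ← Real.exp_mul,
      ← Real.rpow_natCast Q n, hQ_def, ← Real.exp_mul]
    congr 2
    ring
  have hval : ∀ n : ℕ, ((d n)^(α*r+1) * B / d (n+1))^(1/r) = c0 * Q ^ n := by
    intro n
    have h1 : (d n)^(α*r+1) * B / d (n+1) = (d n)^(α*r) * B * Real.exp r := by
      rw [hdrel n, Real.rpow_add (hd0 n), Real.rpow_one, Real.exp_neg]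
      rw [div_eq_iff (ne_of_gt (mul_pos (inv_pos.2 (Real.exp_pos r)) (hd0 n)))]
      field_simp
    rw [h1, Real.mul_rpow (by positivity) (Real.exp_nonneg _),
      Real.mul_rpow (by positivity) hB, ← Real.rpow_mul (hd0 n).le, ← Real.exp_mul,
      show α*r*(1/r) = α by field_simp, show r * (1/r) = 1 by field_simp, hdn n]
    rw [hc0_def]
    ring
  have hd_lim : Filter.Tendsto d Filter.atTop (nhds 0) := by
    have hrepr : ∀ n : ℕ, d n = u * (Real.exp (-r)) ^ n := by
      intro n
      show u * Real.exp (-(n * r)) = _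
      rw [← Real.rpow_natCast (Real.exp (-r)) n, ← Real.exp_mul]
      congr 1
      ring
    have h2 : Filter.Tendsto (fun n : ℕ => (Real.exp (-r)) ^ n) Filter.atTop (nhds 0) :=
      tendsto_pow_atTop_nhds_zero_of_lt_one (Real.exp_nonneg _)
        (Real.exp_lt_one_iff.2 (by linarith))
    have := h2.const_mul u
    rw [mul_zero] at this
    exact this.congr (fun n => (hrepr n).symm)
  -- right telescoping
  set RA : ℕ → ℝ := fun n => (t - (t - d n))⁻¹ * ∫ x in Icc (t - d n) t, g x with hRA_def
  have hstepR : ∀ n, |RA (n+1) - RA n| ≤ c0 * Q ^ n := by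
    intro n
    have h := step_lemma g hgc hr hB key (a := t - d n) (b := t) (a' := t - d (n+1)) (b' := t)
      (by have := hdu n; have := hs.1; linarith)
      (by linarith [hdmono n]) (by linarith [hd0 (n+1)]) le_rfl ht.2
    simp only [sub_sub_cancel] at h
    rw [hval n] at h
    rw [hRA_def]
    simp only [sub_sub_cancel]
    exact h
  have hlimR : Filter.Tendsto RA Filter.atTop (nhds (g t)) := by
    apply avg_tendsto g hgc (fun n => t - d n) (fun _ => t)
      (fun n => sub_lt_self t (hd0 n)) (fun n => ⟨sub_le_self t (hd0 n).le, le_rfl⟩)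
    · have := Filter.Tendsto.const_sub t hd_lim
      rw [sub_zero] at this
      exact this
    · exact tendsto_const_nhds
  have teleR : |g t - RA 0| ≤ c0 / (1 - Q) := tele_seq hc0 hQ0 hQ1 hstepR hlimR
  -- left telescoping
  set LA : ℕ → ℝ := fun n => (s + d n - s)⁻¹ * ∫ x in Icc s (s + d n), g x with hLA_def
  have hstepL : ∀ n, |LA (n+1) - LA n| ≤ c0 * Q ^ n := by
    intro n
    have h := step_lemma g hgc hr hB key (a := s) (b := s + d n) (a' := s) (b' := s + d (n+1))
      hs.1 le_rfl (by linarith [hd0 (n+1)]) (by linarith [hdmono n])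
      (by have := hdu n; have := ht.2; linarith)
    simp only [add_sub_cancel_left] at h
    rw [hval n] at h
    rw [hLA_def]
    simp only [add_sub_cancel_left]
    exact h
  have hlimL : Filter.Tendsto LA Filter.atTop (nhds (g s)) := by
    apply avg_tendsto g hgc (fun _ => s) (fun n => s + d n)
      (fun n => lt_add_of_pos_right s (hd0 n)) (fun n => ⟨le_rfl, le_add_of_nonneg_right (hd0 n).le⟩)
    · exact tendsto_const_nhds
    · have := Filter.Tendsto.const_add s hd_lim
      rw [add_zero] at this
      exact this
  have teleL : |g s - LA 0| ≤ c0 / (1 - Q) := tele_seq hc0 hQ0 hQ1 hstepL hlimL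
  -- RA 0 = LA 0
  have hd00 : d 0 = u := by
    show u * Real.exp (-((0:ℕ) * r)) = u
    norm_num
  have hRALA : RA 0 = LA 0 := by
    rw [hRA_def, hLA_def]
    simp only [hd00]
    rw [show t - u = s by rw [hu_def]; ring, show s + u = t by rw [hu_def]; ring]
  -- combine
  have hcomb : |f t - f s| ≤ c0 / (1 - Q) + c0 / (1 - Q) := by
    rw [← hgf t ht, ← hgf s hs]
    calc |g t - g s| ≤ |g t - RA 0| + |RA 0 - g s| := abs_sub_le _ _ _
      _ ≤ c0 / (1 - Q) + c0 / (1 - Q) := by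
        apply add_le_add teleR
        rw [hRALA, abs_sub_comm]
        exact teleL
  -- final numeric estimate
  set m : ℝ := r * α with hm_def
  have hm : (0:ℝ) < m := by positivity
  have h1Q0 : (0:ℝ) < 1 - Q := by linarith
  have hQle : Q ≤ (1+m)⁻¹ := by
    rw [hQ_def, Real.exp_neg]
    apply inv_anti₀ (by linarith)
    linarith [Real.add_one_le_exp m]
  have h1Q : m / (1+m) ≤ 1 - Q := by
    have h : 1 - (1+m)⁻¹ = m / (1+m) := by
      have h1m : (1+m) ≠ 0 := by linarith
      field_simp
      ring
    linarith [hQle, h.symm.le]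
  have he4 : Real.exp 1 ≤ 4 := by
    have := Real.exp_one_lt_d9
    norm_num at this
    linarith
  have hX : B ^ (1/r) ≤ (4*B) ^ (1/r) :=
    Real.rpow_le_rpow hB (by linarith) (by positivity)
  have hfrac : (α + 2/r)/α = (m + 2)/m := by
    rw [hm_def]
    field_simp
  have step1 : c0 / (1 - Q) ≤ c0 * (1+m) / m := by
    rw [div_le_div_iff₀ h1Q0 hm]
    have h2 : m ≤ (1 - Q) * (1+m) := by
      rw [div_le_iff₀ (by linarith : (0:ℝ) < 1+m)] at h1Q
      linarith
    nlinarith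
  have step2 : c0 * (1+m) ≤ 4 * ((4*B) ^ (1/r)) * (m + 2) * u ^ α := by
    have t1 : Real.exp 1 * B ^ (1/r) ≤ 4 * (4*B) ^ (1/r) := by
      apply mul_le_mul he4 hX (Real.rpow_nonneg hB _) (by norm_num)
    have t2 : u ^ α * (1+m) ≤ u ^ α * (m+2) :=
      mul_le_mul_of_nonneg_left (by linarith) (Real.rpow_nonneg hu.le _)
    calc c0 * (1+m) = (Real.exp 1 * B ^ (1/r)) * (u ^ α * (1+m)) := by
          rw [hc0_def]; ring
      _ ≤ (4 * (4*B) ^ (1/r)) * (u ^ α * (m+2)) := by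
          apply mul_le_mul t1 t2 (by positivity) (by positivity)
      _ = 4 * ((4*B) ^ (1/r)) * (m + 2) * u ^ α := by ring
  calc |f t - f s| ≤ c0 / (1 - Q) + c0 / (1 - Q) := hcomb
    _ ≤ c0 * (1+m) / m + c0 * (1+m) / m := add_le_add step1 step1
    _ ≤ 4 * ((4*B) ^ (1/r)) * (m + 2) * u ^ α / m
        + 4 * ((4*B) ^ (1/r)) * (m + 2) * u ^ α / m := by
        gcongr
    _ = 8 * (4 * B) ^ (1 / r) * ((m + 2) / m) * u ^ α := by ring
    _ = 8 * (4 * B) ^ (1 / r) * ((α + 2 / r) / α) * (t - s) ^ α := by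
        rw [← hfrac, hu_def]

/-- Garsia–Rodemich–Rumsey inequality specialized to `G(u) = u^r`,
`δ(u) = u^{α+2/r}`: a bound on the double integral of
`|f(t)−f(s)|^r / |t−s|^{αr+2}` yields α-Hölder continuity of `f` on `[0,T]` with
constant `8·(4B)^{1/r}·(α+2/r)/α`. -/
theorem stmt_12 (T : ℝ) (hT : 0 < T) (f : ℝ → ℝ) (hf : ContinuousOn f (Set.Icc 0 T))
    (r α B : ℝ) (hr : 1 ≤ r) (hα : 0 < α) (hB : 0 ≤ B)
    (hint : (∫⁻ t in Set.Icc (0:ℝ) T, ∫⁻ s in Set.Icc (0:ℝ) T,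
        ENNReal.ofReal (|f t - f s| ^ r / |t - s| ^ (α * r + 2)))
      ≤ ENNReal.ofReal B) :
    ∀ s ∈ Set.Icc (0:ℝ) T, ∀ t ∈ Set.Icc (0:ℝ) T,
      |f t - f s| ≤ 8 * (4 * B) ^ (1 / r) * ((α + 2 / r) / α) * |t - s| ^ α := by
  intro s hs t ht
  rcases lt_trichotomy s t with h | h | h
  · have := main_aux T hT f hf r α B hr hα hB hint hs ht h
    rwa [abs_of_pos (by linarith : (0:ℝ) < t - s)]
  · subst h
    simp only [sub_self, abs_zero]
    rw [Real.zero_rpow hα.ne', mul_zero]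
  · have := main_aux T hT f hf r α B hr hα hB hint ht hs h
    rw [abs_sub_comm (f t) (f s), abs_sub_comm t s]
    rwa [abs_of_pos (by linarith : (0:ℝ) < s - t)]
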